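/- With epoch and validators defined recursively as above, if L and L' both extend the genesis, L extends L', and epoch(L) = epoch(L'), then validators(L) = validators(L'). -/

import Mathlib

/-- The epoch of a log, defined recursively. -/
def epochFn {Tx : Type*} [DecidableEq Tx] (Lg : List Tx)
    (completed : List Tx → Bool) (L : List Tx) : ℕ :=
  if h : L = [] ∨ L = Lg then 0
  else
    epochFn Lg completed L.dropLast + (if completed L.dropLast then 1 else 0)
termination_by L.length
decreasing_by
  have hne : L ≠ [] := fun hL => h (Or.inl hL)
  have : L.length ≠ 0 := by simpa using hne
  simp [List.length_dropLast]
  omega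

/-- The validator set of a log, defined recursively: it equals the validator
set of the predecessor if the predecessor is not completed, and otherwise
the current ids of the predecessor. -/
def validatorsFn {Tx ID : Type*} [DecidableEq Tx] (Lg : List Tx)
    (completed : List Tx → Bool) (currentIds : List Tx → Finset ID)
    (L : List Tx) : Finset ID :=
  if h : L = [] ∨ L = Lg then currentIds Lg
  else
    if completed L.dropLast then currentIds L.dropLast
    else validatorsFn Lg completed currentIds L.dropLast
termination_by L.length
decreasing_by
  have hne : L ≠ [] := fun hL => h (Or.inl hL)
  have : L.length ≠ 0 := by simpa using hne
  simp [List.length_dropLast]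
  omega


lemma prefix_dropLast_of_strict {Tx : Type*} {M N : List Tx}
    (h : M <+: N) (hlt : M.length < N.length) : M <+: N.dropLast := by
  rw [List.prefix_iff_eq_take] at h ⊢
  rw [List.dropLast_eq_take, List.take_take, min_eq_left (by omega)]
  exact h

lemma epochFn_mono {Tx : Type*} [DecidableEq Tx] (Lg : List Tx)
    (completed : List Tx → Bool) (N M : List Tx)
    (hg : Lg <+: M) (hMN : M <+: N) :
    epochFn Lg completed M ≤ epochFn Lg completed N := by
  by_cases heq : M = N
  · subst heq; exact le_refl _
  · have hlt : M.length < N.length := by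
      rcases lt_or_eq_of_le hMN.length_le with h | h
      · exact h
      · exact absurd (List.prefix_iff_eq_take.mp hMN ▸ (h ▸ (List.take_length : N.take N.length = N))) heq
    have hN : ¬(N = [] ∨ N = Lg) := by
      rintro (rfl | rfl)
      · simp at hlt
      · exact absurd hlt (not_lt.mpr hg.length_le)
    have hd : M <+: N.dropLast := prefix_dropLast_of_strict hMN hlt
    have hdl : N.dropLast.length < N.length := by
      have hne : N ≠ [] := fun h => hN (Or.inl h)
      have : N.length ≠ 0 := by simpa using hne
      simp [List.length_dropLast]; omega
    conv_rhs => rw [epochFn, dif_neg hN]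
    calc epochFn Lg completed M ≤ epochFn Lg completed N.dropLast :=
          epochFn_mono Lg completed N.dropLast M hg hd
      _ ≤ _ := Nat.le_add_right _ _
termination_by N.length

lemma validators_aux {Tx ID : Type*} [DecidableEq Tx]
    (Lg : List Tx) (completed : List Tx → Bool)
    (currentIds : List Tx → Finset ID)
    (L L' : List Tx) (hL' : Lg <+: L')
    (h : L' <+: L)
    (he : epochFn Lg completed L = epochFn Lg completed L') :
    validatorsFn Lg completed currentIds L
      = validatorsFn Lg completed currentIds L' := by
  by_cases heq : L' = L
  · subst heq; rfl
  · have hlt : L'.length < L.length := by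
      rcases lt_or_eq_of_le h.length_le with hh | hh
      · exact hh
      · exact absurd (List.prefix_iff_eq_take.mp h ▸ (hh ▸ (List.take_length : L.take L.length = L))) heq
    have hN : ¬(L = [] ∨ L = Lg) := by
      rintro (rfl | rfl)
      · simp at hlt
      · exact absurd hlt (not_lt.mpr hL'.length_le)
    have hd : L' <+: L.dropLast := prefix_dropLast_of_strict h hlt
    have hdl : L.dropLast.length < L.length := by
      have hne : L ≠ [] := fun hh => hN (Or.inl hh)
      have : L.length ≠ 0 := by simpa using hne
      simp [List.length_dropLast]; omega
    rw [epochFn, dif_neg hN] at he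
    have hmono : epochFn Lg completed L' ≤ epochFn Lg completed L.dropLast :=
      epochFn_mono Lg completed L.dropLast L' hL' hd
    have hcomp : completed L.dropLast = false := by
      by_contra hc
      simp only [Bool.not_eq_false] at hc
      rw [hc] at he
      simp at he
      omega
    have he' : epochFn Lg completed L.dropLast = epochFn Lg completed L' := by
      rw [hcomp] at he; simpa using he
    rw [validatorsFn, dif_neg hN, hcomp]
    simp only [Bool.false_eq_true, if_false]
    exact validators_aux Lg completed currentIds L.dropLast L' hL' hd he'
termination_by L.length

theorem validators_eq_of_same_epoch {Tx ID : Type*} [DecidableEq Tx]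
    (Lg : List Tx) (completed : List Tx → Bool) (hg : completed Lg = true)
    (currentIds : List Tx → Finset ID)
    (L L' : List Tx) (hL : Lg <+: L) (hL' : Lg <+: L')
    (h : L' <+: L)
    (he : epochFn Lg completed L = epochFn Lg completed L') :
    validatorsFn Lg completed currentIds L
      = validatorsFn Lg completed currentIds L' := by
  exact validators_aux Lg completed currentIds L L' hL' h he
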